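/- arXiv:1802.02741 — 2 statements merged into one kernel-verified Lean document; each statement's English description precedes it below -/
import Mathlib

section
/- Let U ⊂ V be a k-dimensional subspace of a Euclidean space V, let E ∈ Gr(1,V) be a line not contained in U^⊥, and set ν(E) = (E + U^⊥) ∩ U. Then for any line L ⊂ U one has cos(E, L) = cos(E, U) · cos(ν(E), L), where cos(E,F) for a line E and a subspace F denotes the ratio of the length of the orthogonal projection onto F of a unit vector spanning E. -/
open RealInnerProductSpace


/-- Multiplicativity of cosines: for a unit vector `e` spanning a line `E` not
contained in `U^⊥`, a unit vector `l` spanning a line `L ⊆ U`, and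
`u = π_U(e)/‖π_U(e)‖` the unit vector spanning `ν(E) = (E + U^⊥) ∩ U`, one has
`cos(E,L) = cos(E,U) · cos(ν(E),L)`, where `cos` of a line with a subspace is the
norm of the orthogonal projection of the spanning unit vector. -/
theorem stmt9 {V : Type*} [NormedAddCommGroup V] [InnerProductSpace ℝ V]
    [FiniteDimensional ℝ V] (U : Submodule ℝ V) (e l : V)
    (he : ‖e‖ = 1) (hl : ‖l‖ = 1) (hlU : l ∈ U)
    (hproj : (Submodule.orthogonalProjectionOnto U e : V) ≠ 0) :
    ‖(Submodule.orthogonalProjectionOnto (ℝ ∙ l) e : V)‖ =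
      ‖(Submodule.orthogonalProjectionOnto U e : V)‖ *
        ‖(Submodule.orthogonalProjectionOnto (ℝ ∙ l)
            (‖(Submodule.orthogonalProjectionOnto U e : V)‖⁻¹ • (Submodule.orthogonalProjectionOnto U e : V)) : V)‖ := by
  set p : V := (Submodule.orthogonalProjectionOnto U e : V) with hp
  have hpn : ‖p‖ ≠ 0 := norm_ne_zero_iff.mpr hproj
  have key : ∀ w : V, ‖(Submodule.orthogonalProjectionOnto (ℝ ∙ l) w : V)‖ = |⟪l, w⟫| := by
    intro w
    rw [← Submodule.starProjection_apply, Submodule.starProjection_singleton]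
    simp [norm_smul, hl, Real.norm_eq_abs]
  rw [key, key, inner_smul_right]
  have hle : ⟪l, e⟫ = ⟪l, p⟫ := by
    have := Submodule.inner_starProjection_left_eq_right U l e
    rw [Submodule.starProjection_eq_self_iff.mpr hlU] at this
    rw [hp, ← Submodule.starProjection_apply]; exact this
  rw [hle, abs_mul, abs_inv, abs_norm]
  field_simp
end

section
/- Let μ be a translation-invariant Borel measure on the space of affine hyperplanes in ℝ^n, finite on compacta, and let W ⊂ ℝ^n be an affine subspace of dimension at most n−2. Then the set of affine hyperplanes containing W has μ-measure zero. -/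
open MeasureTheory

/-- The space of affine hyperplanes in `ℝ^n`, parametrized (2-to-1) by a unit normal
`u ∈ S^{n-1}` and an offset `c ∈ ℝ`, the hyperplane being `{x | ⟨u,x⟩ = c}`.
Translation by `v ∈ ℝ^n` acts by `(u,c) ↦ (u, c + ⟨u,v⟩)`.

Statement: if `μ` is a translation-invariant Borel measure on the space of affine
hyperplanes, finite on compacta, and `W` is a nonempty affine subspace of dimension
at most `n-2`, then the set of hyperplanes containing `W` has `μ`-measure zero. -/
theorem stmt12 {n : ℕ} (hn : 2 ≤ n)
    (μ : Measure (Metric.sphere (0 : EuclideanSpace ℝ (Fin n)) 1 × ℝ))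
    (hinv : ∀ v : EuclideanSpace ℝ (Fin n),
      MeasurePreserving
        (fun p : Metric.sphere (0 : EuclideanSpace ℝ (Fin n)) 1 × ℝ =>
          (p.1, p.2 + (inner ℝ (p.1 : EuclideanSpace ℝ (Fin n)) v : ℝ))) μ μ)
    (hfin : ∀ K : Set (Metric.sphere (0 : EuclideanSpace ℝ (Fin n)) 1 × ℝ),
      IsCompact K → μ K < ⊤)
    (W : AffineSubspace ℝ (EuclideanSpace ℝ (Fin n)))
    (hWne : (W : Set (EuclideanSpace ℝ (Fin n))).Nonempty)
    (hWdim : Module.finrank ℝ W.direction ≤ n - 2) :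
    μ {p | ∀ x ∈ (W : Set (EuclideanSpace ℝ (Fin n))),
        (inner ℝ (p.1 : EuclideanSpace ℝ (Fin n)) x : ℝ) = p.2} = 0 := by
  classical
  obtain ⟨x₀, hx₀⟩ := hWne
  set S : Set ((Metric.sphere (0 : EuclideanSpace ℝ (Fin n)) 1) × ℝ) :=
    {p | ∀ x ∈ (W : Set (EuclideanSpace ℝ (Fin n))), (inner ℝ (p.1 : (EuclideanSpace ℝ (Fin n))) x : ℝ) = p.2} with hSdef
  -- S is closed, hence measurable
  have hSclosed : IsClosed S := by
    have : S = ⋂ x ∈ (W : Set (EuclideanSpace ℝ (Fin n))),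
        {p : (Metric.sphere (0 : EuclideanSpace ℝ (Fin n)) 1) × ℝ | (inner ℝ (p.1 : (EuclideanSpace ℝ (Fin n))) x : ℝ) = p.2} := by
      ext p; simp [hSdef, Set.mem_iInter]
    rw [this]
    exact isClosed_biInter fun x _ => isClosed_eq
      ((continuous_subtype_val.comp continuous_fst).inner continuous_const)
      continuous_snd
  have hSmeas : MeasurableSet S := hSclosed.measurableSet
  -- offset is determined
  have hc : ∀ p ∈ S, (inner ℝ (p.1 : (EuclideanSpace ℝ (Fin n))) x₀ : ℝ) = p.2 := fun p hp => hp x₀ hx₀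
  -- pieces
  set Si : Fin n → Set ((Metric.sphere (0 : EuclideanSpace ℝ (Fin n)) 1) × ℝ) :=
    fun i => S ∩ {p | (p.1 : (EuclideanSpace ℝ (Fin n))) i ≠ 0} with hSidef
  have hSimeas : ∀ i, MeasurableSet (Si i) := by
    intro i
    refine hSmeas.inter ?_
    have hcont : Continuous fun p : (Metric.sphere (0 : EuclideanSpace ℝ (Fin n)) 1) × ℝ => (p.1 : (EuclideanSpace ℝ (Fin n))) i :=
      (EuclideanSpace.proj i).continuous.comp (continuous_subtype_val.comp continuous_fst)
    exact (isOpen_compl_iff.mpr (isClosed_eq hcont continuous_const)).measurableSet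
  -- each piece has measure zero
  have hizero : ∀ i, μ (Si i) = 0 := by
    intro i
    by_contra hne
    set e : (EuclideanSpace ℝ (Fin n)) := EuclideanSpace.single i (1 : ℝ) with he
    -- translation maps
    set t : ℕ → ℝ := fun k => 1 / (k + 1) with ht
    have htinj : Function.Injective t := by
      intro a b hab
      have h' : (1:ℝ)/((a:ℝ)+1) = 1/((b:ℝ)+1) := hab
      rw [div_eq_div_iff (by positivity) (by positivity)] at h'
      exact_mod_cast (by linarith : (a:ℝ) = b)
    have htmem : ∀ k, t k ∈ Set.Ioc (0:ℝ) 1 := by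
      intro k
      constructor
      · positivity
      · rw [ht]; rw [div_le_one (by positivity)]; simp
    set φ : ℕ → ((Metric.sphere (0 : EuclideanSpace ℝ (Fin n)) 1) × ℝ) → ((Metric.sphere (0 : EuclideanSpace ℝ (Fin n)) 1) × ℝ) := fun k p =>
      (p.1, p.2 + (inner ℝ (p.1 : (EuclideanSpace ℝ (Fin n))) ((-(t k)) • e) : ℝ)) with hφ
    have hφpres : ∀ k, MeasurePreserving (φ k) μ μ := fun k => hinv ((-(t k)) • e)
    set B : ℕ → Set ((Metric.sphere (0 : EuclideanSpace ℝ (Fin n)) 1) × ℝ) := fun k => φ k ⁻¹' (Si i) with hB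
    have hBmeas : ∀ k, MeasurableSet (B k) := fun k =>
      (hφpres k).measurable (hSimeas i)
    have hBμ : ∀ k, μ (B k) = μ (Si i) := fun k =>
      (hφpres k).measure_preimage (hSimeas i).nullMeasurableSet
    -- membership description of B k
    have hBmem : ∀ k p, p ∈ B k →
        (p.1 : (EuclideanSpace ℝ (Fin n))) i ≠ 0 ∧ p.2 = (inner ℝ (p.1 : (EuclideanSpace ℝ (Fin n))) x₀ : ℝ) + t k * (p.1 : (EuclideanSpace ℝ (Fin n))) i := by
      intro k p hp
      have h1 : (φ k p) ∈ Si i := hp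
      have h2 : (φ k p).1 = p.1 := rfl
      have hne0 : (p.1 : (EuclideanSpace ℝ (Fin n))) i ≠ 0 := by
        have := h1.2
        simpa [hφ] using this
      have hval : (inner ℝ ((φ k p).1 : (EuclideanSpace ℝ (Fin n))) x₀ : ℝ) = (φ k p).2 := hc _ h1.1
      have hin : (inner ℝ (p.1 : (EuclideanSpace ℝ (Fin n))) ((-(t k)) • e) : ℝ) = -(t k) * (p.1 : (EuclideanSpace ℝ (Fin n))) i := by
        rw [real_inner_smul_right, he, EuclideanSpace.inner_single_right]
        simp
      refine ⟨hne0, ?_⟩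
      simp only [hφ] at hval
      rw [hin] at hval
      linarith [hval]
    -- disjointness
    have hdisj : Pairwise (Function.onFun Disjoint B) := by
      intro k l hkl
      rw [Function.onFun, Set.disjoint_left]
      intro p hpk hpl
      obtain ⟨hne0, hk⟩ := hBmem k p hpk
      obtain ⟨_, hl⟩ := hBmem l p hpl
      have : t k * (p.1 : (EuclideanSpace ℝ (Fin n))) i = t l * (p.1 : (EuclideanSpace ℝ (Fin n))) i := by linarith [hk, hl]
      have : t k = t l := mul_right_cancel₀ hne0 this
      exact hkl (htinj this)
    -- all translates lie in a compact set
    set K : Set ((Metric.sphere (0 : EuclideanSpace ℝ (Fin n)) 1) × ℝ) := Set.univ ×ˢ Set.Icc (-(‖x₀‖ + 1)) (‖x₀‖ + 1) with hK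
    have hKcomp : IsCompact K := by
      have : CompactSpace (Metric.sphere (0 : EuclideanSpace ℝ (Fin n)) 1) := Metric.sphere.compactSpace 0 1
      exact isCompact_univ.prod isCompact_Icc
    have hBsub : ∀ k, B k ⊆ K := by
      intro k p hp
      obtain ⟨hne0, hk⟩ := hBmem k p hp
      constructor
      · trivial
      · have hu : ‖(p.1 : (EuclideanSpace ℝ (Fin n)))‖ = 1 := by
          have := p.1.2
          simpa [mem_sphere_iff_norm] using this
        have h1 : |(inner ℝ (p.1 : (EuclideanSpace ℝ (Fin n))) x₀ : ℝ)| ≤ ‖x₀‖ := by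
          have := abs_real_inner_le_norm (p.1 : (EuclideanSpace ℝ (Fin n))) x₀
          rwa [hu, one_mul] at this
        have h2 : |(p.1 : (EuclideanSpace ℝ (Fin n))) i| ≤ 1 := by
          have := abs_real_inner_le_norm (p.1 : (EuclideanSpace ℝ (Fin n))) (EuclideanSpace.single i (1:ℝ))
          rw [hu, EuclideanSpace.inner_single_right, EuclideanSpace.norm_single] at this
          simpa using this
        have h3 : |t k * (p.1 : (EuclideanSpace ℝ (Fin n))) i| ≤ 1 := by
          rw [abs_mul]
          have h4 : |t k| ≤ 1 := by
            rw [abs_of_pos (htmem k).1]; exact (htmem k).2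
          calc |t k| * |(p.1 : (EuclideanSpace ℝ (Fin n))) i| ≤ 1 * 1 :=
                mul_le_mul h4 h2 (abs_nonneg _) zero_le_one
            _ = 1 := one_mul 1
        have := abs_le.mp h1
        have := abs_le.mp h3
        simp only [Set.mem_Icc]
        constructor <;> [linarith [hk]; linarith [hk]]
    -- conclude
    have hUnion : μ (⋃ k, B k) = ∑' k : ℕ, μ (B k) := measure_iUnion hdisj hBmeas
    have hle : μ (⋃ k, B k) ≤ μ K := measure_mono (Set.iUnion_subset hBsub)
    rw [hUnion] at hle
    have : (∑' _ : ℕ, μ (Si i)) = ⊤ := ENNReal.tsum_const_eq_top_of_ne_zero hne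
    rw [tsum_congr hBμ, this] at hle
    exact absurd (top_le_iff.mp hle) (hfin K hKcomp).ne
  -- cover
  have hcover : S ⊆ ⋃ i, Si i := by
    intro p hp
    have hu : ‖(p.1 : (EuclideanSpace ℝ (Fin n)))‖ = 1 := by
      have := p.1.2
      simpa [mem_sphere_iff_norm] using this
    have hne : (p.1 : (EuclideanSpace ℝ (Fin n))) ≠ 0 := by
      intro h; rw [h, norm_zero] at hu; exact one_ne_zero hu.symm
    have : ∃ i, (p.1 : (EuclideanSpace ℝ (Fin n))) i ≠ 0 := by
      by_contra h
      push_neg at h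
      exact hne (PiLp.ext h)
    obtain ⟨i, hi⟩ := this
    exact Set.mem_iUnion.mpr ⟨i, hp, hi⟩
  have : μ (⋃ i, Si i) = 0 := measure_iUnion_null fun i => hizero i
  exact le_antisymm (le_trans (measure_mono hcover) this.le) (by simp)
end
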